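/- arXiv:math/0303071 — 4 statements merged into one kernel-verified Lean document; each statement's English description precedes it below -/
import Mathlib

section
/- If X_1, X_2, … are i.i.d. random variables with law ω, where ω is a probability measure on (0,1) with μ = ∫₀¹ |log(1-x)| ω(dx) < ∞ and ∫₀¹ |log x| ω(dx) < ∞, and Y_j = (1-X_1)⋯(1-X_{j-1})·X_j, then -(1/j)·log Y_j → μ almost surely as j → ∞. -/
open MeasureTheory ProbabilityTheory Filter Topology

/-- If `X_1, X_2, …` are i.i.d. with law `ω`, a probability measure on `(0,1)` with
`μ = ∫ |log(1-x)| ω(dx) < ∞` and `∫ |log x| ω(dx) < ∞`, and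
`Y_j = (1-X_1)⋯(1-X_{j-1}) X_j`, then `-(1/j) log Y_j → μ` almost surely. -/
theorem stmt1 {Ω' : Type*} [MeasurableSpace Ω'] (P : Measure Ω') [IsProbabilityMeasure P]
    (ω : Measure ℝ) [IsProbabilityMeasure ω]
    (hsupp : ω ((Set.Ioo (0 : ℝ) 1)ᶜ) = 0)
    (hμ : Integrable (fun x => Real.log (1 - x)) ω)
    (hlogx : Integrable (fun x => Real.log x) ω)
    (X : ℕ → Ω' → ℝ) (hXmeas : ∀ i, Measurable (X i))
    (hXindep : iIndepFun (m := fun _ : ℕ => (inferInstance : MeasurableSpace ℝ)) X P)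
    (hXlaw : ∀ i, Measure.map (X i) P = ω)
    (Y : ℕ → Ω' → ℝ)
    (hY : ∀ j ω₀, Y j ω₀ = (∏ i ∈ Finset.range j, (1 - X i ω₀)) * X j ω₀) :
    ∀ᵐ ω₀ ∂P, Tendsto (fun j : ℕ => -(1 / (j : ℝ)) * Real.log (Y j ω₀)) atTop
      (𝓝 (∫ x, |Real.log (1 - x)| ∂ω)) := by
  -- the ae set of ω where everything is in (0,1)
  have haeω : ∀ᵐ x ∂ω, x ∈ Set.Ioo (0:ℝ) 1 := by
    rw [ae_iff]
    exact hsupp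
  -- measurable auxiliary functions
  have hg1 : Measurable (fun x : ℝ => Real.log (1 - x)) :=
    Real.measurable_log.comp (measurable_const.sub measurable_id)
  have hg2 : Measurable (fun x : ℝ => Real.log x) := Real.measurable_log
  set Z : ℕ → Ω' → ℝ := fun i ω₀ => Real.log (1 - X i ω₀) with hZdef
  set W : ℕ → Ω' → ℝ := fun i ω₀ => Real.log (X i ω₀) with hWdef
  -- integrability
  have hZint : Integrable (Z 0) P := by
    have : Integrable (fun x => Real.log (1 - x)) (Measure.map (X 0) P) := by
      rw [hXlaw 0]; exact hμ
    exact (integrable_map_measure hg1.aestronglyMeasurable (hXmeas 0).aemeasurable).mp this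
  have hWint : Integrable (W 0) P := by
    have : Integrable (fun x => Real.log x) (Measure.map (X 0) P) := by
      rw [hXlaw 0]; exact hlogx
    exact (integrable_map_measure hg2.aestronglyMeasurable (hXmeas 0).aemeasurable).mp this
  have hXid : ∀ i, IdentDistrib (X i) (X 0) P P := fun i =>
    ⟨(hXmeas i).aemeasurable, (hXmeas 0).aemeasurable, by rw [hXlaw i, hXlaw 0]⟩
  -- SLLN for Z
  have hZslln := strong_law_ae_real Z hZint
    (fun i j hij => ((hXindep.indepFun hij).comp hg1 hg1))
    (fun i => (hXid i).comp hg1)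
  have hWslln := strong_law_ae_real W hWint
    (fun i j hij => ((hXindep.indepFun hij).comp hg2 hg2))
    (fun i => (hXid i).comp hg2)
  -- a.s. all X i in (0,1)
  have hmem : ∀ᵐ ω₀ ∂P, ∀ i, X i ω₀ ∈ Set.Ioo (0:ℝ) 1 := by
    rw [ae_all_iff]
    intro i
    have : P ((X i) ⁻¹' (Set.Ioo (0:ℝ) 1)ᶜ) = 0 := by
      rw [← Measure.map_apply (hXmeas i) measurableSet_Ioo.compl, hXlaw i]
      exact hsupp
    rw [ae_iff]
    exact this
  -- identify the limit constant
  have hc1 : P[Z 0] = ∫ x, Real.log (1 - x) ∂ω := by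
    rw [← hXlaw 0, integral_map (hXmeas 0).aemeasurable hg1.aestronglyMeasurable]
  have habs : ∫ x, |Real.log (1 - x)| ∂ω = - ∫ x, Real.log (1 - x) ∂ω := by
    rw [← integral_neg]
    apply integral_congr_ae
    filter_upwards [haeω] with x hx
    have h1 : (0:ℝ) < 1 - x := by linarith [hx.2]
    have h2 : 1 - x < 1 := by linarith [hx.1]
    have := Real.log_neg h1 h2
    rw [abs_of_nonpos this.le]
  filter_upwards [hZslln, hWslln, hmem] with ω₀ h1 h2 hx
  -- log Y j = ∑ Z + W j
  have hlogY : ∀ j, Real.log (Y j ω₀) = (∑ i ∈ Finset.range j, Z i ω₀) + W j ω₀ := by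
    intro j
    rw [hY]
    rw [Real.log_mul _ (ne_of_gt (hx j).1), Real.log_prod]
    · intro i _
      have : (0:ℝ) < 1 - X i ω₀ := by linarith [(hx i).2]
      exact ne_of_gt this
    · apply Finset.prod_ne_zero_iff.mpr
      intro i _
      have : (0:ℝ) < 1 - X i ω₀ := by linarith [(hx i).2]
      exact ne_of_gt this
  -- W j / j → 0
  have hT : Tendsto (fun j : ℕ => W j ω₀ / j) atTop (𝓝 0) := by
    have hshift : Tendsto (fun j : ℕ =>
        (∑ i ∈ Finset.range (j+1), W i ω₀) / ((j:ℝ)+1)) atTop (𝓝 (P[W 0])) := by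
      apply (h2.comp (tendsto_add_atTop_nat 1)).congr
      intro j
      simp [Function.comp]
    have hratio : Tendsto (fun j : ℕ => ((j:ℝ)+1) / j) atTop (𝓝 1) := by
      have : (fun j : ℕ => ((j:ℝ)+1) / j) =ᶠ[atTop] fun j : ℕ => 1 + 1/(j:ℝ) := by
        filter_upwards [eventually_gt_atTop 0] with j hj
        field_simp
      rw [tendsto_congr' this]
      have := tendsto_one_div_atTop_nhds_zero_nat (𝕜 := ℝ)
      simpa using tendsto_const_nhds.add this
    have hA : Tendsto (fun j : ℕ =>
        (∑ i ∈ Finset.range (j+1), W i ω₀) / (j : ℝ)) atTop (𝓝 (P[W 0])) := by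
      have := hratio.mul hshift
      rw [one_mul] at this
      apply this.congr'
      filter_upwards [eventually_gt_atTop 0] with j hj
      have hj' : (j:ℝ) ≠ 0 := Nat.cast_ne_zero.mpr hj.ne'
      have hj1 : ((j:ℝ)+1) ≠ 0 := by positivity
      field_simp
    have := hA.sub h2
    rw [sub_self] at this
    apply this.congr
    intro j
    rw [Finset.sum_range_succ]
    ring
  -- combine
  have hfinal : Tendsto (fun j : ℕ => -(1/(j:ℝ)) * Real.log (Y j ω₀)) atTop
      (𝓝 (-(P[Z 0] + 0))) := by
    have := (h1.add hT).neg
    apply this.congr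
    intro j
    rw [hlogY j]
    ring
  rw [habs, ← hc1]
  simpa using hfinal
end

section
/- Let ω be a probability measure on (0,1) with ∫₀¹ |log(1-x)| ω(dx) < ∞, and let B_n(x) = Σ_{m=1}^{n-1} C(n,m) x^m (1-x)^{n-m} log(1 - m/n) be the Bernstein polynomial of degree n for log(1-x). Then lim_{n→∞} ∫₀¹ |B_n(x) - log(1-x)| ω(dx) = 0. -/
open MeasureTheory Filter Topology Finset

noncomputable def bp (n m : ℕ) (x : ℝ) : ℝ := (n.choose m : ℝ) * x ^ m * (1 - x) ^ (n - m)

lemma bp_nonneg {n m : ℕ} {x : ℝ} (h0 : 0 ≤ x) (h1 : x ≤ 1) : 0 ≤ bp n m x := by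
  have : (0:ℝ) ≤ 1 - x := by linarith
  unfold bp; positivity

lemma sum_bp (n : ℕ) (x : ℝ) : ∑ m ∈ range (n + 1), bp n m x = 1 := by
  have h := add_pow x (1 - x) n
  have h1 : x + (1 - x) = 1 := by ring
  rw [h1, one_pow] at h
  rw [show (1:ℝ) = ∑ m ∈ range (n+1), x ^ m * (1-x) ^ (n-m) * n.choose m from h]
  exact Finset.sum_congr rfl fun m _ => by unfold bp; ring

lemma sum_var (n : ℕ) (hn : 0 < n) {x : ℝ} (hx : x ∈ Set.Icc (0:ℝ) 1) :
    ∑ m ∈ range (n + 1), ((m:ℝ)/n - x)^2 * bp n m x = x * (1 - x) / n := by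
  have h := bernstein.variance (n := n) (by exact_mod_cast hn.ne') ⟨x, hx⟩
  rw [← h, ← Fin.sum_univ_eq_sum_range (fun m => ((m:ℝ)/n - x)^2 * bp n m x) (n+1)]
  refine Finset.sum_congr rfl fun k _ => ?_
  simp only [bernstein_apply, bernstein.z, bp]
  ring

lemma sum_tail (n : ℕ) (hn : 0 < n) {x : ℝ} (hx : x ∈ Set.Icc (0:ℝ) 1) {δ : ℝ} (hδ : 0 < δ) :
    ∑ m ∈ (range (n+1)).filter (fun m : ℕ => δ ≤ |(m:ℝ)/n - x|), bp n m x
      ≤ x * (1 - x) / (n * δ^2) := by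
  have hn' : (0:ℝ) < n := by exact_mod_cast hn
  have key : δ^2 * ∑ m ∈ (range (n+1)).filter (fun m : ℕ => δ ≤ |(m:ℝ)/n - x|), bp n m x
      ≤ x * (1 - x) / n := by
    rw [Finset.mul_sum]
    calc ∑ m ∈ (range (n+1)).filter (fun m : ℕ => δ ≤ |(m:ℝ)/n - x|), δ^2 * bp n m x
        ≤ ∑ m ∈ (range (n+1)).filter (fun m : ℕ => δ ≤ |(m:ℝ)/n - x|),
            ((m:ℝ)/n - x)^2 * bp n m x := by
          refine Finset.sum_le_sum fun m hm => ?_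
          have hm' := (Finset.mem_filter.mp hm).2
          have h2 : δ^2 ≤ ((m:ℝ)/n - x)^2 := by
            calc δ^2 ≤ |(m:ℝ)/n - x|^2 := by
                  exact pow_le_pow_left₀ hδ.le hm' 2
              _ = ((m:ℝ)/n - x)^2 := sq_abs _
          exact mul_le_mul_of_nonneg_right h2 (bp_nonneg hx.1 hx.2)
      _ ≤ ∑ m ∈ range (n+1), ((m:ℝ)/n - x)^2 * bp n m x := by
          refine Finset.sum_le_sum_of_subset_of_nonneg (Finset.filter_subset _ _)
            fun m _ _ => ?_
          exact mul_nonneg (sq_nonneg _) (bp_nonneg hx.1 hx.2)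
      _ = x * (1 - x) / n := sum_var n hn hx
  have hδ2 : (0:ℝ) < δ^2 := by positivity
  rw [show x * (1-x) / (↑n * δ^2) = (x * (1-x) / ↑n) / δ^2 from (div_div _ _ _).symm]
  rw [le_div_iff₀ hδ2, mul_comm]
  exact key

/-- The Bernstein polynomial of degree `n` for `log (1-x)`:
`B_n(x) = ∑_{m=1}^{n-1} C(n,m) x^m (1-x)^{n-m} log(1 - m/n)`. -/
noncomputable def bernsteinLog (n : ℕ) (x : ℝ) : ℝ :=
  ∑ m ∈ Finset.Icc 1 (n - 1),
    (n.choose m : ℝ) * x ^ m * (1 - x) ^ (n - m) * Real.log (1 - (m : ℝ) / n)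

lemma bernsteinLog_eq (n : ℕ) (x : ℝ) :
    bernsteinLog n x = ∑ m ∈ Finset.Icc 1 (n - 1), bp n m x * Real.log (1 - (m:ℝ)/n) :=
  rfl

lemma bernsteinLog_nonpos (n : ℕ) {x : ℝ} (hx : x ∈ Set.Ioo (0:ℝ) 1) :
    bernsteinLog n x ≤ 0 := by
  rw [bernsteinLog_eq]
  refine Finset.sum_nonpos fun m hm => ?_
  obtain ⟨hm1, hm2⟩ := Finset.mem_Icc.mp hm
  have hn : 1 ≤ n := by
    rcases Nat.eq_zero_or_pos n with h | h
    · omega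
    · exact h
  have hn' : (0:ℝ) < n := by exact_mod_cast hn
  have hmn : (m:ℝ) ≤ n := by exact_mod_cast (by omega : m ≤ n)
  refine mul_nonpos_of_nonneg_of_nonpos (bp_nonneg hx.1.le hx.2.le) ?_
  refine Real.log_nonpos ?_ ?_
  · have : (m:ℝ)/n ≤ 1 := by rw [div_le_one hn']; exact hmn
    linarith
  · have : (0:ℝ) ≤ (m:ℝ)/n := by positivity
    linarith

-- the expectation inequality : ∑ bp * log((n+1-m)/(n+1)) ≥ log (1-x)
lemma step2 (n : ℕ) {x : ℝ} (hx : x ∈ Set.Ioo (0:ℝ) 1) :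
    Real.log (1 - x) ≤ ∑ m ∈ range (n+1), bp n m x * Real.log (((n:ℝ)+1-m)/((n:ℝ)+1)) := by
  obtain ⟨hx0, hx1⟩ := hx
  have h1x : (0:ℝ) < 1 - x := by linarith
  have hterm : ∀ m ∈ range (n+1),
      bp n m x * Real.log (1-x) + bp n m x - bp (n+1) m x
        ≤ bp n m x * Real.log (((n:ℝ)+1-m)/((n:ℝ)+1)) := by
    intro m hm
    have hmn : m ≤ n := Nat.lt_succ_iff.mp (Finset.mem_range.mp hm)
    have hmn' : (m:ℝ) ≤ n := by exact_mod_cast hmn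
    have hd : (0:ℝ) < (n:ℝ)+1-m := by linarith
    have hn1 : (0:ℝ) < (n:ℝ)+1 := by positivity
    have hA : (0:ℝ) < ((n:ℝ)+1-m)/((n:ℝ)+1) := by positivity
    -- log(A) ≥ log(1-x) + 1 - (1-x)/A
    have hlog : Real.log (1-x) + 1 - (1-x)/(((n:ℝ)+1-m)/((n:ℝ)+1))
        ≤ Real.log (((n:ℝ)+1-m)/((n:ℝ)+1)) := by
      have h := Real.one_sub_inv_le_log_of_pos (x := (((n:ℝ)+1-m)/((n:ℝ)+1))/(1-x))
        (by positivity)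
      rw [Real.log_div (by positivity) (by positivity)] at h
      have hinv : ((((n:ℝ)+1-m)/((n:ℝ)+1))/(1-x))⁻¹ = (1-x)/(((n:ℝ)+1-m)/((n:ℝ)+1)) := by
        rw [inv_div]
      rw [hinv] at h
      linarith
    -- bp n m x * ((1-x)/A) = bp (n+1) m x
    have hid : bp n m x * ((1-x)/(((n:ℝ)+1-m)/((n:ℝ)+1))) = bp (n+1) m x := by
      have hnat : ((n+1).choose m : ℝ) * ((n:ℝ)+1-m) = (n.choose m : ℝ) * ((n:ℝ)+1) := by
        have h1 : (n+1).choose m * (n+1-m) = n.choose m * (n+1) := by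
          rw [← Nat.choose_succ_right_eq, ← Nat.add_one_mul_choose_eq, Nat.succ_mul]
          ring
        have := congrArg (fun k : ℕ => (k : ℝ)) h1
        push_cast at this
        rw [Nat.cast_sub (by omega)] at this
        push_cast at this
        linarith [this]
      have hpow : (1 - x) ^ (n + 1 - m) = (1 - x) ^ (n - m) * (1-x) := by
        rw [show n + 1 - m = (n - m) + 1 by omega, pow_succ]
      have hc : ((n+1).choose m : ℝ) = (n.choose m : ℝ) * ((n:ℝ)+1) / ((n:ℝ)+1-m) := by
        field_simp
        linarith [hnat]
      unfold bp
      rw [hpow, hc]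
      field_simp
    have hbp : 0 ≤ bp n m x := bp_nonneg hx0.le hx1.le
    have := mul_le_mul_of_nonneg_left hlog hbp
    calc bp n m x * Real.log (1-x) + bp n m x - bp (n+1) m x
        = bp n m x * (Real.log (1-x) + 1 - (1-x)/(((n:ℝ)+1-m)/((n:ℝ)+1))) := by
          rw [← hid]; ring
      _ ≤ bp n m x * Real.log (((n:ℝ)+1-m)/((n:ℝ)+1)) := this
  have hsum := Finset.sum_le_sum hterm
  rw [Finset.sum_sub_distrib, Finset.sum_add_distrib, ← Finset.sum_mul, sum_bp n x] at hsum
  have hQ : ∑ m ∈ range (n+1), bp (n+1) m x ≤ 1 := by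
    rw [← sum_bp (n+1) x]
    refine Finset.sum_le_sum_of_subset_of_nonneg ?_ fun m _ _ => bp_nonneg hx0.le hx1.le
    exact Finset.range_subset_range.mpr (by omega)
  linarith

lemma bernsteinLog_lb (n : ℕ) {x : ℝ} (hx : x ∈ Set.Ioo (0:ℝ) 1) :
    2 * Real.log (1 - x) ≤ bernsteinLog n x := by
  obtain ⟨hx0, hx1⟩ := hx
  have key : ∑ m ∈ range (n+1), bp n m x * (2 * Real.log (((n:ℝ)+1-m)/((n:ℝ)+1)))
      ≤ bernsteinLog n x := by
    rw [bernsteinLog_eq]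
    have hsub : Finset.Icc 1 (n-1) ⊆ range (n+1) := by
      intro m hm; obtain ⟨h1, h2⟩ := Finset.mem_Icc.mp hm
      exact Finset.mem_range.mpr (by omega)
    -- sum over range(n+1) = sum over Icc + sum over the rest (which is ≤ 0)
    rw [← Finset.sum_sdiff hsub]
    have hrest : ∑ m ∈ range (n+1) \ Finset.Icc 1 (n-1),
        bp n m x * (2 * Real.log (((n:ℝ)+1-m)/((n:ℝ)+1))) ≤ 0 := by
      refine Finset.sum_nonpos fun m hm => ?_
      have hmn : m ≤ n := Nat.lt_succ_iff.mp (Finset.mem_range.mp (Finset.mem_sdiff.mp hm).1)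
      have hmn' : (m:ℝ) ≤ n := by exact_mod_cast hmn
      refine mul_nonpos_of_nonneg_of_nonpos (bp_nonneg hx0.le hx1.le) ?_
      have : Real.log (((n:ℝ)+1-m)/((n:ℝ)+1)) ≤ 0 := by
        refine Real.log_nonpos (div_nonneg (by linarith) (by positivity)) ?_
        rw [div_le_one (by positivity)]
        linarith
      linarith
    have hmain : ∀ m ∈ Finset.Icc 1 (n-1),
        bp n m x * (2 * Real.log (((n:ℝ)+1-m)/((n:ℝ)+1)))
          ≤ bp n m x * Real.log (1 - (m:ℝ)/n) := by
      intro m hm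
      obtain ⟨hm1, hm2⟩ := Finset.mem_Icc.mp hm
      have hn2 : 2 ≤ n := by omega
      have hmn : m + 1 ≤ n := by omega
      have hn' : (0:ℝ) < n := by exact_mod_cast (show 0 < n by omega)
      have hm1' : (1:ℝ) ≤ m := by exact_mod_cast hm1
      have hmn'' : (m:ℝ) + 1 ≤ n := by exact_mod_cast hmn
      refine mul_le_mul_of_nonneg_left ?_ (bp_nonneg hx0.le hx1.le)
      have hnum : (0:ℝ) < (n:ℝ)+1-m := by linarith
      have hb : (0:ℝ) < ((n:ℝ)+1-m)/((n:ℝ)+1) := by positivity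
      have heq1 : 1 - (m:ℝ)/n = ((n:ℝ)-m)/n := by field_simp
      have hbsq : (((n:ℝ)+1-m)/((n:ℝ)+1))^2 ≤ 1 - (m:ℝ)/n := by
        rw [heq1, div_pow, div_le_div_iff₀ (by positivity) hn']
        have h6 : (1:ℝ) ≤ (n:ℝ)*((n:ℝ)-m) := by nlinarith
        nlinarith [mul_nonneg (by linarith : (0:ℝ) ≤ (m:ℝ))
          (by linarith : (0:ℝ) ≤ (n:ℝ)*((n:ℝ)-m) - 1)]
      calc 2 * Real.log (((n:ℝ)+1-m)/((n:ℝ)+1))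
          = Real.log ((((n:ℝ)+1-m)/((n:ℝ)+1))^2) := by rw [Real.log_pow]; push_cast; ring
        _ ≤ Real.log (1 - (m:ℝ)/n) := Real.log_le_log (by positivity) hbsq
    calc ∑ m ∈ range (n+1) \ Finset.Icc 1 (n-1),
            bp n m x * (2 * Real.log (((n:ℝ)+1-m)/((n:ℝ)+1)))
          + ∑ m ∈ Finset.Icc 1 (n-1), bp n m x * (2 * Real.log (((n:ℝ)+1-m)/((n:ℝ)+1)))
        ≤ 0 + ∑ m ∈ Finset.Icc 1 (n-1), bp n m x * Real.log (1 - (m:ℝ)/n) := by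
          exact add_le_add hrest (Finset.sum_le_sum hmain)
      _ = ∑ m ∈ Finset.Icc 1 (n-1), bp n m x * Real.log (1 - (m:ℝ)/n) := by ring
  have h2 := step2 n ⟨hx0, hx1⟩
  have h3 : 2 * Real.log (1-x)
      ≤ ∑ m ∈ range (n+1), bp n m x * (2 * Real.log (((n:ℝ)+1-m)/((n:ℝ)+1))) := by
    calc 2 * Real.log (1-x)
        ≤ 2 * ∑ m ∈ range (n+1), bp n m x * Real.log (((n:ℝ)+1-m)/((n:ℝ)+1)) := by
          linarith
      _ = _ := by rw [Finset.mul_sum]; exact Finset.sum_congr rfl fun m _ => by ring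
  linarith

lemma bernsteinLog_eq_range {n : ℕ} (hn : 1 ≤ n) (x : ℝ) :
    bernsteinLog n x = ∑ m ∈ range n, bp n m x * Real.log (1 - (m:ℝ)/n) := by
  rw [bernsteinLog_eq]
  refine Finset.sum_subset ?_ ?_
  · intro m hm
    obtain ⟨h1, h2⟩ := Finset.mem_Icc.mp hm
    exact Finset.mem_range.mpr (by omega)
  · intro m hm hm'
    have : m = 0 := by
      have := Finset.mem_range.mp hm
      simp only [Finset.mem_Icc] at hm'
      omega
    subst this
    simp

set_option maxHeartbeats 1000000 in
lemma quant {x : ℝ} (hx : x ∈ Set.Ioo (0:ℝ) 1) {δ : ℝ} (hδ : 0 < δ) (hδ' : δ ≤ (1-x)/2)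
    {n : ℕ} (hn : 1 ≤ n) :
    |bernsteinLog n x - Real.log (1 - x)|
      ≤ 2*δ/(1-x) + (Real.log n + |Real.log (1-x)|) * (x*(1-x)/(n*δ^2)) := by
  obtain ⟨hx0, hx1⟩ := hx
  have h1x : (0:ℝ) < 1 - x := by linarith
  have hn0 : (0:ℝ) < n := by exact_mod_cast hn
  set L := Real.log (1 - x) with hL
  set g : ℕ → ℝ := fun m => (if m < n then Real.log (1 - (m:ℝ)/n) else 0) - L with hg
  have key : bernsteinLog n x - L = ∑ m ∈ range (n+1), bp n m x * g m := by
    have e1 : ∑ m ∈ range (n+1), bp n m x * g m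
        = ∑ m ∈ range (n+1), bp n m x * (if m < n then Real.log (1 - (m:ℝ)/n) else 0)
          - ∑ m ∈ range (n+1), bp n m x * L := by
      rw [← Finset.sum_sub_distrib]
      exact Finset.sum_congr rfl fun m _ => by rw [hg]; ring
    rw [e1, ← Finset.sum_mul, sum_bp n x, one_mul]
    congr 1
    rw [Finset.sum_range_succ, if_neg (lt_irrefl n), mul_zero, add_zero,
      bernsteinLog_eq_range hn x]
    exact Finset.sum_congr rfl fun m hm => by rw [if_pos (Finset.mem_range.mp hm)]
  rw [key]
  have habs : |∑ m ∈ range (n+1), bp n m x * g m| ≤ ∑ m ∈ range (n+1), bp n m x * |g m| := by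
    refine (Finset.abs_sum_le_sum_abs _ _).trans ?_
    refine le_of_eq (Finset.sum_congr rfl fun m _ => ?_)
    rw [abs_mul, abs_of_nonneg (bp_nonneg hx0.le hx1.le)]
  refine habs.trans ?_
  rw [← Finset.sum_filter_add_sum_filter_not (range (n+1)) (fun m : ℕ => δ ≤ |(m:ℝ)/n - x|)]
  have hfar : ∑ m ∈ (range (n+1)).filter (fun m : ℕ => δ ≤ |(m:ℝ)/n - x|), bp n m x * |g m|
      ≤ (Real.log n + |L|) * (x*(1-x)/(n*δ^2)) := by
    have hbd : ∀ m ∈ (range (n+1)).filter (fun m : ℕ => δ ≤ |(m:ℝ)/n - x|),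
        bp n m x * |g m| ≤ bp n m x * (Real.log n + |L|) := by
      intro m hm
      refine mul_le_mul_of_nonneg_left ?_ (bp_nonneg hx0.le hx1.le)
      have hlogn : 0 ≤ Real.log n := Real.log_nonneg (by exact_mod_cast hn)
      by_cases hmn : m < n
      · have hmn' : (m:ℝ) + 1 ≤ n := by exact_mod_cast hmn
        have hy : (0:ℝ) < 1 - (m:ℝ)/n := by
          rw [sub_pos, div_lt_one hn0]; linarith
        have hy1 : 1 - (m:ℝ)/n ≤ 1 := by
          have : (0:ℝ) ≤ (m:ℝ)/n := by positivity
          linarith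
        have hlogy : |Real.log (1 - (m:ℝ)/n)| ≤ Real.log n := by
          rw [abs_of_nonpos (Real.log_nonpos hy.le hy1), ← Real.log_inv]
          refine Real.log_le_log (by positivity) ?_
          rw [show (1 - (m:ℝ)/n)⁻¹ = (n:ℝ)/((n:ℝ)-m) by
            rw [show 1 - (m:ℝ)/n = ((n:ℝ)-m)/n by field_simp]; rw [inv_div]]
          rw [div_le_iff₀ (by linarith)]
          nlinarith
        rw [hg]
        simp only [if_pos hmn]
        calc |Real.log (1 - (m:ℝ)/n) - L| ≤ |Real.log (1 - (m:ℝ)/n)| + |L| := abs_sub _ _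
          _ ≤ Real.log n + |L| := by linarith
      · rw [hg]
        simp only [if_neg hmn, zero_sub, abs_neg]
        linarith
    refine le_trans (Finset.sum_le_sum hbd) ?_
    rw [← Finset.sum_mul]
    rw [mul_comm (Real.log ↑n + |L|)]
    refine mul_le_mul_of_nonneg_right (sum_tail n hn ⟨hx0.le, hx1.le⟩ hδ) ?_
    have h1 : 0 ≤ Real.log n := Real.log_nonneg (by exact_mod_cast hn)
    linarith [abs_nonneg L]
  have hnear : ∑ m ∈ (range (n+1)).filter (fun m : ℕ => ¬ δ ≤ |(m:ℝ)/n - x|), bp n m x * |g m|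
      ≤ 2*δ/(1-x) := by
    have hbd : ∀ m ∈ (range (n+1)).filter (fun m : ℕ => ¬ δ ≤ |(m:ℝ)/n - x|),
        bp n m x * |g m| ≤ bp n m x * (2*δ/(1-x)) := by
      intro m hm
      have hm' := (Finset.mem_filter.mp hm).2
      push_neg at hm'
      rw [abs_lt] at hm'
      obtain ⟨ha, hb⟩ := hm'
      set t : ℝ := (m:ℝ)/n with ht
      have htx : |t - x| < δ := abs_lt.mpr ⟨ha, hb⟩
      have ht0 : 0 ≤ t := by positivity
      have htlt : t < 1 := by nlinarith
      have h1t : (1-x)/2 ≤ 1 - t := by nlinarith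
      have h1t0 : (0:ℝ) < 1 - t := by linarith
      have hmn : m < n := by
        by_contra hcon
        push_neg at hcon
        have : (n:ℝ) ≤ m := by exact_mod_cast hcon
        have : (1:ℝ) ≤ t := by rw [ht, le_div_iff₀ hn0]; linarith
        linarith
      refine mul_le_mul_of_nonneg_left ?_ (bp_nonneg hx0.le hx1.le)
      rw [hg]
      simp only [if_pos hmn, ← ht]
      rw [show Real.log (1 - t) - L = Real.log ((1-t)/(1-x)) from by
        rw [Real.log_div h1t0.ne' h1x.ne', hL]]
      rw [abs_le]
      constructor
      · have h2 := Real.one_sub_inv_le_log_of_pos (x := (1-t)/(1-x)) (by positivity)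
        rw [show ((1-t)/(1-x))⁻¹ = (1-x)/(1-t) from inv_div _ _] at h2
        have h3 : (1-x)/(1-t) - 1 = (t - x)/(1-t) := by field_simp; ring
        have h4 : (t-x)/(1-t) ≤ 2*δ/(1-x) := by
          rw [div_le_div_iff₀ h1t0 h1x]
          nlinarith
        have h5 : 1 - (1-x)/(1-t) ≤ Real.log ((1-t)/(1-x)) := h2
        nlinarith [h4, h5]
      · have h2 := Real.log_le_sub_one_of_pos (x := (1-t)/(1-x)) (by positivity)
        have h3 : (1-t)/(1-x) - 1 = (x-t)/(1-x) := by field_simp; ring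
        have h4 : (x-t)/(1-x) ≤ 2*δ/(1-x) := by
          rw [div_le_div_iff₀ h1x h1x]
          nlinarith
        nlinarith [h2, h4]
    refine le_trans (Finset.sum_le_sum hbd) ?_
    rw [← Finset.sum_mul]
    have h1 : ∑ m ∈ (range (n+1)).filter (fun m : ℕ => ¬ δ ≤ |(m:ℝ)/n - x|), bp n m x ≤ 1 := by
      rw [← sum_bp n x]
      exact Finset.sum_le_sum_of_subset_of_nonneg (Finset.filter_subset _ _)
        fun m _ _ => bp_nonneg hx0.le hx1.le
    calc _ ≤ 1 * (2*δ/(1-x)) := mul_le_mul_of_nonneg_right h1 (by positivity)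
      _ = 2*δ/(1-x) := one_mul _
  linarith

lemma pointwiseBL {x : ℝ} (hx : x ∈ Set.Ioo (0:ℝ) 1) :
    Tendsto (fun n : ℕ => |bernsteinLog n x - Real.log (1 - x)|) atTop (𝓝 0) := by
  obtain ⟨hx0, hx1⟩ := hx
  have h1x : (0:ℝ) < 1 - x := by linarith
  rw [NormedAddCommGroup.tendsto_nhds_zero]
  intro ε hε
  set δ : ℝ := min ((1-x)*ε/8) ((1-x)/2) with hδdef
  have hδ : 0 < δ := lt_min (by positivity) (by positivity)
  have hδ' : δ ≤ (1-x)/2 := min_le_right _ _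
  have hδε : 2*δ/(1-x) ≤ ε/4 := by
    have h1 : δ ≤ (1-x)*ε/8 := min_le_left _ _
    rw [div_le_iff₀ h1x]
    nlinarith
  set L := Real.log (1 - x) with hL
  set K : ℝ := x*(1-x)/δ^2 with hK
  have hlim : Tendsto (fun n : ℕ => 2*δ/(1-x) + (Real.log n / n + |L| / n) * K)
      atTop (𝓝 (2*δ/(1-x) + (0 + 0) * K)) := by
    refine tendsto_const_nhds.add (Tendsto.mul_const K (Tendsto.add ?_ ?_))
    · have h1 : Tendsto (fun y : ℝ => Real.log y / y) atTop (𝓝 0) :=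
        Real.isLittleO_log_id_atTop.tendsto_div_nhds_zero
      exact h1.comp tendsto_natCast_atTop_atTop
    · exact Tendsto.div_atTop tendsto_const_nhds tendsto_natCast_atTop_atTop
  have hlim2 : ∀ᶠ n : ℕ in atTop, 2*δ/(1-x) + (Real.log n / n + |L| / n) * K < ε := by
    refine hlim.eventually_lt_const ?_
    rw [zero_add, zero_mul, add_zero]
    linarith
  filter_upwards [hlim2, eventually_ge_atTop 1] with n hn2 hn1
  rw [Real.norm_eq_abs, abs_abs]
  have hn0 : (0:ℝ) < n := by exact_mod_cast hn1
  have heq : (Real.log n + |L|) * (x*(1-x)/(n*δ^2)) = (Real.log n / n + |L| / n) * K := by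
    rw [hK]; field_simp
  calc |bernsteinLog n x - L| ≤ 2*δ/(1-x) + (Real.log n + |L|) * (x*(1-x)/(n*δ^2)) :=
        quant ⟨hx0, hx1⟩ hδ hδ' hn1
    _ = 2*δ/(1-x) + (Real.log n / n + |L| / n) * K := by rw [heq]
    _ < ε := hn2

/-- If `ω` is a probability measure on `(0,1)` with `∫ |log(1-x)| ω(dx) < ∞`, then the
Bernstein polynomials of `log(1-x)` converge to it in `L¹(ω)`. -/
theorem stmt2 (ω : Measure ℝ) [IsProbabilityMeasure ω]
    (hsupp : ω ((Set.Ioo (0 : ℝ) 1)ᶜ) = 0)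
    (hμ : Integrable (fun x => Real.log (1 - x)) ω) :
    Tendsto (fun n : ℕ => ∫ x, |bernsteinLog n x - Real.log (1 - x)| ∂ω) atTop (𝓝 0) := by
  have haei : ∀ᵐ x ∂ω, x ∈ Set.Ioo (0:ℝ) 1 := by
    rw [ae_iff]
    convert hsupp using 2
    rfl
  have hmeaslog : Measurable fun x : ℝ => Real.log (1 - x) :=
    Real.measurable_log.comp (measurable_const.sub measurable_id)
  have hcont : ∀ n, Continuous (bernsteinLog n) := by
    intro n
    unfold bernsteinLog
    exact continuous_finset_sum _ fun m _ => (by fun_prop : Continuous fun x : ℝ => (n.choose m : ℝ) * x ^ m * (1 - x) ^ (n - m) * Real.log (1 - (m : ℝ) / n))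
  have hF : ∀ n : ℕ, AEStronglyMeasurable
      (fun x => |bernsteinLog n x - Real.log (1 - x)|) ω :=
    fun n => (((hcont n).measurable.sub hmeaslog).abs).aestronglyMeasurable
  have hbound : Integrable (fun x => 3 * |Real.log (1 - x)|) ω := (hμ.abs).const_mul 3
  have h := tendsto_integral_of_dominated_convergence (μ := ω)
    (F := fun (n : ℕ) (x : ℝ) => |bernsteinLog n x - Real.log (1 - x)|)
    (f := fun _ => (0:ℝ)) (fun x => 3 * |Real.log (1 - x)|) hF hbound ?_ ?_
  · simpa using h
  · intro n
    filter_upwards [haei] with x hx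
    have h1 := bernsteinLog_lb n hx
    have h2 := bernsteinLog_nonpos n hx
    have h3 : Real.log (1 - x) ≤ 0 :=
      Real.log_nonpos (by linarith [hx.2]) (by linarith [hx.1])
    have h4 : |Real.log (1 - x)| = -Real.log (1 - x) := abs_of_nonpos h3
    rw [Real.norm_eq_abs, abs_abs, h4, abs_le]
    constructor <;> linarith
  · filter_upwards [haei] with x hx
    exact pointwiseBL hx
end

section
/- For every integer n ≥ 1 and every real x ∈ [0,1]: Σ_{m=0}^{n-1} C(n,m) x^m (1-x)^{n-m} (h_{n-m} - h_n) - x^n h_n = -(x/1 + x²/2 + … + xⁿ/n). -/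
/-- The `n`-th harmonic number `h_n = ∑_{j=1}^n 1/j`, with `h_0 = 0`. -/
noncomputable def harmonic' (n : ℕ) : ℝ := ∑ j ∈ Finset.Icc 1 n, (1 : ℝ) / j

lemma harmonic'_succ (n : ℕ) : harmonic' (n + 1) = harmonic' n + 1 / (n + 1) := by
  unfold harmonic'
  rw [Finset.sum_Icc_succ_top (by omega)]
  push_cast
  ring

lemma binom1 (n : ℕ) (x : ℝ) :
    ∑ m ∈ Finset.range (n + 1), (n.choose m : ℝ) * x ^ m * (1 - x) ^ (n - m) = 1 := by
  have h := add_pow x (1 - x) n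
  simp only [add_sub_cancel, one_pow] at h
  calc ∑ m ∈ Finset.range (n + 1), (n.choose m : ℝ) * x ^ m * (1 - x) ^ (n - m)
      = ∑ m ∈ Finset.range (n + 1), x ^ m * (1 - x) ^ (n - m) * (n.choose m : ℝ) :=
        Finset.sum_congr rfl fun m _ => by ring
    _ = 1 := h.symm

lemma binom2 (n : ℕ) (x : ℝ) :
    ∑ m ∈ Finset.range (n + 1), ((n + 1).choose m : ℝ) * x ^ m * (1 - x) ^ (n + 1 - m)
      = 1 - x ^ (n + 1) := by
  have h := binom1 (n + 1) x
  rw [Finset.sum_range_succ] at h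
  simp only [Nat.choose_self, Nat.cast_one, Nat.sub_self, pow_zero, one_mul, mul_one] at h
  linarith

/-- Key identity: `∑_{m=0}^{n} C(n,m) x^m (1-x)^{n-m} h_{n-m} = h_n - ∑_{j=1}^n x^j/j`. -/
lemma keyF (n : ℕ) (x : ℝ) :
    ∑ m ∈ Finset.range (n + 1),
        (n.choose m : ℝ) * x ^ m * (1 - x) ^ (n - m) * harmonic' (n - m)
      = harmonic' n - ∑ j ∈ Finset.Icc 1 n, x ^ j / j := by
  induction n with
  | zero => simp [harmonic']
  | succ n ih =>
    -- Peel first term (m = 0) of the big sum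
    rw [Finset.sum_range_succ' (fun m =>
      ((n + 1).choose m : ℝ) * x ^ m * (1 - x) ^ (n + 1 - m) * harmonic' (n + 1 - m)) (n + 1)]
    simp only [Nat.succ_sub_succ, Nat.choose_zero_right, Nat.cast_one, pow_zero, one_mul,
      Nat.sub_zero]
    -- Split via Pascal's rule
    have pascal : ∀ m ∈ Finset.range (n + 1),
        ((n + 1).choose (m + 1) : ℝ) * x ^ (m + 1) * (1 - x) ^ (n - m) * harmonic' (n - m)
        = x * ((n.choose m : ℝ) * x ^ m * (1 - x) ^ (n - m) * harmonic' (n - m))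
          + (n.choose (m + 1) : ℝ) * x ^ (m + 1) * (1 - x) ^ (n - m) * harmonic' (n - m) := by
      intro m _
      rw [Nat.choose_succ_succ]
      push_cast
      ring
    rw [Finset.sum_congr rfl pascal, Finset.sum_add_distrib, ← Finset.mul_sum]
    -- The second sum plus the (1-x)^{n+1} * h(n+1) term equals G
    have hG : (∑ m ∈ Finset.range (n + 1),
          (n.choose (m + 1) : ℝ) * x ^ (m + 1) * (1 - x) ^ (n - m) * harmonic' (n - m))
          + (1 - x) ^ (n + 1) * harmonic' (n + 1)
        = ∑ m ∈ Finset.range (n + 1),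
          (n.choose m : ℝ) * x ^ m * (1 - x) ^ (n + 1 - m) * harmonic' (n + 1 - m) := by
      have h2 : ∑ m ∈ Finset.range (n + 2),
            (n.choose m : ℝ) * x ^ m * (1 - x) ^ (n + 1 - m) * harmonic' (n + 1 - m)
          = ∑ m ∈ Finset.range (n + 1),
            (n.choose m : ℝ) * x ^ m * (1 - x) ^ (n + 1 - m) * harmonic' (n + 1 - m) := by
        rw [Finset.sum_range_succ]
        simp [Nat.choose_succ_self]
      rw [← h2, Finset.sum_range_succ' (fun m =>
        (n.choose m : ℝ) * x ^ m * (1 - x) ^ (n + 1 - m) * harmonic' (n + 1 - m)) (n + 1)]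
      simp only [Nat.succ_sub_succ, Nat.choose_zero_right, Nat.cast_one, pow_zero, one_mul,
        Nat.sub_zero]
    rw [add_assoc, hG]
    -- Rewrite G termwise
    have hGterm : ∀ m ∈ Finset.range (n + 1),
        (n.choose m : ℝ) * x ^ m * (1 - x) ^ (n + 1 - m) * harmonic' (n + 1 - m)
        = (1 - x) * ((n.choose m : ℝ) * x ^ m * (1 - x) ^ (n - m) * harmonic' (n - m))
          + (1 / (n + 1)) * (((n + 1).choose m : ℝ) * x ^ m * (1 - x) ^ (n + 1 - m)) := by
      intro m hm
      have hmn : m ≤ n := Nat.lt_succ_iff.mp (Finset.mem_range.mp hm)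
      have h1 : n + 1 - m = (n - m) + 1 := by omega
      have hcast : ((n - m : ℕ) : ℝ) + 1 ≠ 0 := by positivity
      have hn1 : ((n : ℝ) + 1) ≠ 0 := by positivity
      have hchoose : (n.choose m : ℝ) * (n + 1) = ((n + 1).choose m : ℝ) * ((n - m : ℕ) + 1) := by
        have h3 := Nat.choose_mul_succ_eq n m
        rw [show n + 1 - m = (n - m) + 1 from by omega] at h3
        exact_mod_cast h3
      have hkey : (n.choose m : ℝ) * (1 / (((n - m : ℕ) : ℝ) + 1))
          = ((n + 1).choose m : ℝ) * (1 / ((n : ℝ) + 1)) := by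
        rw [mul_one_div, mul_one_div, div_eq_div_iff hcast hn1]
        linarith [hchoose]
      rw [h1, harmonic'_succ (n - m), pow_succ]
      linear_combination (x ^ m * (1 - x) ^ (n - m) * (1 - x)) * hkey
    rw [Finset.sum_congr rfl hGterm, Finset.sum_add_distrib, ← Finset.mul_sum, ← Finset.mul_sum,
      ih, binom2, harmonic'_succ, Finset.sum_Icc_succ_top (by omega : 1 ≤ n + 1)]
    push_cast
    ring

/-- Summation formula: for every `n ≥ 1` and `x ∈ [0,1]`,
`∑_{m=0}^{n-1} C(n,m) x^m (1-x)^{n-m} (h_{n-m} - h_n) - x^n h_n = -(x/1 + x²/2 + … + xⁿ/n)`. -/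
theorem stmt3 (n : ℕ) (hn : 1 ≤ n) (x : ℝ) (hx : x ∈ Set.Icc (0 : ℝ) 1) :
    (∑ m ∈ Finset.range n,
        (n.choose m : ℝ) * x ^ m * (1 - x) ^ (n - m) * (harmonic' (n - m) - harmonic' n))
      - x ^ n * harmonic' n
    = -∑ j ∈ Finset.Icc 1 n, x ^ j / j := by
  have h0 : harmonic' 0 = 0 := by simp [harmonic']
  have hfull : ∑ m ∈ Finset.range (n + 1),
      (n.choose m : ℝ) * x ^ m * (1 - x) ^ (n - m) * (harmonic' (n - m) - harmonic' n)
      = (∑ m ∈ Finset.range n,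
          (n.choose m : ℝ) * x ^ m * (1 - x) ^ (n - m) * (harmonic' (n - m) - harmonic' n))
        - x ^ n * harmonic' n := by
    rw [Finset.sum_range_succ]
    simp [h0]
    ring
  rw [← hfull]
  have hsplit : ∀ m ∈ Finset.range (n + 1),
      (n.choose m : ℝ) * x ^ m * (1 - x) ^ (n - m) * (harmonic' (n - m) - harmonic' n)
      = (n.choose m : ℝ) * x ^ m * (1 - x) ^ (n - m) * harmonic' (n - m)
        - harmonic' n * ((n.choose m : ℝ) * x ^ m * (1 - x) ^ (n - m)) := by
    intro m _; ring
  rw [Finset.sum_congr rfl hsplit, Finset.sum_sub_distrib, keyF, ← Finset.mul_sum, binom1]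
  ring
end

section
/- Let ω be a probability measure on (0,1). Then for every continuous function f on [0,1], Σ_{m=1}^n q(n,m) f(m/n) → ∫₀¹ f(x) ω(dx) as n → ∞; that is, the probability measures q(n,·) placed on the points {1/n, 2/n, …, n/n} converge weakly to ω. -/
open MeasureTheory Filter Topology

/-- Binomial moments `w(n,m) = C(n,m) ∫₀¹ x^m (1-x)^{n-m} ω(dx)`. -/
noncomputable def w (ω : Measure ℝ) (n m : ℕ) : ℝ :=
  (n.choose m : ℝ) * ∫ x, x ^ m * (1 - x) ^ (n - m) ∂ω

/-- `W(n) = 1 - w(n,0)`. -/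
noncomputable def W (ω : Measure ℝ) (n : ℕ) : ℝ := 1 - w ω n 0

/-- Transition probabilities `q(n,m) = w(n,m)/W(n)`. -/
noncomputable def q (ω : Measure ℝ) (n m : ℕ) : ℝ := w ω n m / W ω n

/-- `μ = ∫₀¹ |log(1-x)| ω(dx)`. -/
noncomputable def mu (ω : Measure ℝ) : ℝ := ∫ x, |Real.log (1 - x)| ∂ω

/-- `ν = ∫₀¹ (log(1-x))² ω(dx)`. -/
noncomputable def nu (ω : Measure ℝ) : ℝ := ∫ x, (Real.log (1 - x)) ^ 2 ∂ω

/-- `ω` is non-geometric: the pushforward of `ω` under `x ↦ -log(1-x)` is non-lattice,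
i.e. it is not (a.s.) concentrated on `d·ℤ` for any `d > 0`. -/
def NonGeometric (ω : Measure ℝ) : Prop :=
  ¬ ∃ d : ℝ, 0 < d ∧ ∀ᵐ x ∂ω, ∃ k : ℤ, -Real.log (1 - x) = d * k

open unitInterval in
/-- The measures `q(n,·)` on `{1/n, …, n/n}` converge weakly to `ω`: for every continuous `f`
on `[0,1]`, `∑_{m=1}^n q(n,m) f(m/n) → ∫₀¹ f dω`. -/
theorem stmt18 (ω : Measure ℝ) [IsProbabilityMeasure ω]
    (hsupp : ω ((Set.Ioo (0 : ℝ) 1)ᶜ) = 0)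
    (f : ℝ → ℝ) (hf : ContinuousOn f (Set.Icc 0 1)) :
    Tendsto (fun n : ℕ => ∑ m ∈ Finset.Icc 1 n, q ω n m * f ((m : ℝ) / n)) atTop
      (𝓝 (∫ x, f x ∂ω)) := by
  -- ω-a.e. x lies in (0,1)
  have hae : ∀ᵐ x ∂ω, x ∈ Set.Ioo (0 : ℝ) 1 := by
    rw [MeasureTheory.ae_iff]
    exact hsupp
  -- integrability of the monomials
  have hmono : ∀ n m : ℕ, Integrable (fun x : ℝ => x ^ m * (1 - x) ^ (n - m)) ω := by
    intro n m
    refine (integrable_const (1 : ℝ)).mono'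
      ((continuous_pow m).mul ((continuous_const.sub continuous_id).pow _)).aestronglyMeasurable ?_
    filter_upwards [hae] with x hx
    have h0 : (0:ℝ) ≤ x := hx.1.le
    have h1 : x ≤ 1 := hx.2.le
    have h2 : (0:ℝ) ≤ 1 - x := by linarith
    rw [Real.norm_eq_abs, abs_of_nonneg (by positivity)]
    calc x ^ m * (1 - x) ^ (n - m) ≤ 1 ^ m * 1 ^ (n - m) := by gcongr <;> linarith
      _ = 1 := by simp
  -- the w's sum to 1
  have hsum1 : ∀ n : ℕ, ∑ m ∈ Finset.range (n + 1), w ω n m = 1 := by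
    intro n
    have h1 : ∑ m ∈ Finset.range (n + 1), w ω n m
        = ∫ x, ∑ m ∈ Finset.range (n + 1),
            (n.choose m : ℝ) * (x ^ m * (1 - x) ^ (n - m)) ∂ω := by
      rw [integral_finset_sum _ fun m _ => (hmono n m).const_mul _]
      exact Finset.sum_congr rfl fun m _ => by rw [w, integral_const_mul]
    have h2 : ∀ x : ℝ, ∑ m ∈ Finset.range (n + 1),
        (n.choose m : ℝ) * (x ^ m * (1 - x) ^ (n - m)) = 1 := by
      intro x
      have := add_pow x (1 - x) n
      have hx : x + (1 - x) = 1 := by ring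
      rw [hx, one_pow] at this
      calc ∑ m ∈ Finset.range (n + 1), (n.choose m : ℝ) * (x ^ m * (1 - x) ^ (n - m))
          = ∑ m ∈ Finset.range (n + 1), x ^ m * (1 - x) ^ (n - m) * (n.choose m : ℝ) :=
            Finset.sum_congr rfl fun m _ => by ring
        _ = 1 := this.symm
    simp only [h1, h2]
    simp
  -- w(n,0) → 0
  have hW0 : Tendsto (fun n : ℕ => w ω n 0) atTop (𝓝 0) := by
    have heq : ∀ n : ℕ, w ω n 0 = ∫ x, (1 - x) ^ n ∂ω := by
      intro n; simp [w]
    simp only [heq]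
    have := tendsto_integral_of_dominated_convergence (F := fun n (x : ℝ) => (1 - x) ^ n)
        (f := fun _ : ℝ => (0 : ℝ)) (bound := fun _ : ℝ => (1 : ℝ))
        (fun n => ((continuous_const.sub continuous_id).pow n).aestronglyMeasurable)
        (integrable_const 1)
        (fun n => by
          filter_upwards [hae] with x hx
          have h2 : (0:ℝ) ≤ 1 - x := by linarith [hx.2.le]
          rw [Real.norm_eq_abs, abs_of_nonneg (by positivity)]
          calc (1 - x) ^ n ≤ 1 ^ n := by gcongr; linarith [hx.1.le]
            _ = 1 := one_pow n)
        (by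
          filter_upwards [hae] with x hx
          have h2 : (0:ℝ) ≤ 1 - x := by linarith [hx.2.le]
          exact tendsto_pow_atTop_nhds_zero_of_lt_one h2 (by linarith [hx.1]))
    simpa using this
  have hWlim : Tendsto (fun n : ℕ => W ω n) atTop (𝓝 1) := by
    have := tendsto_const_nhds (x := (1:ℝ)) (f := atTop (α := ℕ)) |>.sub hW0
    simpa [W] using this
  -- integrability of f
  have hrestrict : ω.restrict (Set.Ioo 0 1) = ω := Measure.restrict_eq_self_of_ae_mem hae
  have hfm : AEStronglyMeasurable f ω := by
    have := (hf.mono Set.Ioo_subset_Icc_self).aemeasurable measurableSet_Ioo (μ := ω)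
    rw [hrestrict] at this
    exact this.aestronglyMeasurable
  obtain ⟨C, hC⟩ := isCompact_Icc.exists_bound_of_continuousOn hf
  have hfint : Integrable f ω := by
    refine (integrable_const C).mono' hfm ?_
    filter_upwards [hae] with x hx
    exact hC x (Set.Ioo_subset_Icc_self hx)
  -- the continuous map on I
  set g : C(I, ℝ) := ⟨Set.Icc 0 1 |>.restrict f, hf.restrict⟩ with hg
  -- the Bernstein sums
  set S : ℕ → ℝ := fun n => ∑ m ∈ Finset.range (n + 1), w ω n m * f ((m : ℝ) / n) with hSdef
  set P : ℕ → ℝ → ℝ := fun n x => ∑ m ∈ Finset.range (n + 1),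
      f ((m : ℝ) / n) * ((n.choose m : ℝ) * (x ^ m * (1 - x) ^ (n - m))) with hPdef
  have hPint : ∀ n, Integrable (P n) ω := fun n =>
    integrable_finset_sum _ fun m _ => ((hmono n m).const_mul _).const_mul _
  have hSP : ∀ n, S n = ∫ x, P n x ∂ω := by
    intro n
    rw [hSdef, hPdef]
    simp only
    rw [integral_finset_sum _ fun m _ => ((hmono n m).const_mul _).const_mul _]
    refine Finset.sum_congr rfl fun m _ => ?_
    rw [integral_const_mul, integral_const_mul, w]
    ring
  -- P n agrees with the Bernstein approximation on I
  have hPB : ∀ n (x : I), P n (x : ℝ) = bernsteinApproximation n g x := by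
    intro n x
    rw [bernsteinApproximation.apply]
    rw [hPdef]
    simp only
    rw [← Fin.sum_univ_eq_sum_range
      (fun m => f ((m : ℝ) / n) * ((n.choose m : ℝ) * ((x:ℝ) ^ m * (1 - (x:ℝ)) ^ (n - m))))]
    refine Finset.sum_congr rfl fun k _ => ?_
    rw [bernstein_apply]
    have : g (bernstein.z k) = f ((k : ℝ) / n) := rfl
    rw [this]
    ring
  -- S n → ∫ f
  have hnorm : Tendsto (fun n => ‖bernsteinApproximation n g - g‖) atTop (𝓝 0) := by
    have := bernsteinApproximation_uniform g
    rw [tendsto_iff_norm_sub_tendsto_zero] at this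
    exact this
  have hS : Tendsto S atTop (𝓝 (∫ x, f x ∂ω)) := by
    have key : ∀ n, ‖S n - ∫ x, f x ∂ω‖ ≤ ‖bernsteinApproximation n g - g‖ := by
      intro n
      rw [hSP n, ← integral_sub (hPint n) hfint]
      calc ‖∫ x, (P n x - f x) ∂ω‖ ≤ ∫ x, ‖P n x - f x‖ ∂ω :=
            norm_integral_le_integral_norm _
        _ = ∫ x, |P n x - f x| ∂ω := by simp [Real.norm_eq_abs]
        _ ≤ ∫ _x, ‖bernsteinApproximation n g - g‖ ∂ω := by
            refine integral_mono_ae ((hPint n).sub hfint).abs (integrable_const _) ?_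
            filter_upwards [hae] with x hx
            have hxI : x ∈ I := Set.Ioo_subset_Icc_self hx
            have h1 : P n x - f x = (bernsteinApproximation n g - g) ⟨x, hxI⟩ := by
              rw [ContinuousMap.sub_apply, ← hPB n ⟨x, hxI⟩]
              rfl
            rw [h1, ← Real.norm_eq_abs]
            exact (bernsteinApproximation n g - g).norm_coe_le_norm _
        _ = ‖bernsteinApproximation n g - g‖ := by simp
    have h0 : Tendsto (fun n => S n - ∫ x, f x ∂ω) atTop (𝓝 0) :=
      squeeze_zero_norm key hnorm
    have := h0.add_const (∫ x, f x ∂ω)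
    simpa using this
  -- rewrite the target sum
  have hEq : ∀ n : ℕ, ∑ m ∈ Finset.Icc 1 n, q ω n m * f ((m : ℝ) / n)
      = (S n - w ω n 0 * f 0) / W ω n := by
    intro n
    have h1 : ∑ m ∈ Finset.Icc 1 n, q ω n m * f ((m : ℝ) / n)
        = (∑ m ∈ Finset.Icc 1 n, w ω n m * f ((m : ℝ) / n)) / W ω n := by
      rw [Finset.sum_div]
      exact Finset.sum_congr rfl fun m _ => by rw [q]; ring
    rw [h1]
    congr 1
    have herase : (Finset.range (n + 1)).erase 0 = Finset.Icc 1 n := by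
      ext m
      simp [Nat.lt_succ_iff, Nat.one_le_iff_ne_zero, and_comm]
    have h2 := Finset.sum_erase_add (Finset.range (n + 1))
      (fun m => w ω n m * f ((m : ℝ) / n)) (Finset.mem_range.mpr n.succ_pos)
    rw [herase] at h2
    simp only [Nat.cast_zero, zero_div] at h2
    have h4 : S n = (∑ m ∈ Finset.Icc 1 n, w ω n m * f ((m : ℝ) / n)) + w ω n 0 * f 0 := h2.symm
    rw [h4]; ring
  have hfinal : Tendsto (fun n => (S n - w ω n 0 * f 0) / W ω n) atTop
      (𝓝 (((∫ x, f x ∂ω) - 0 * f 0) / 1)) :=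
    (hS.sub (hW0.mul_const _)).div hWlim one_ne_zero
  simp only [zero_mul, sub_zero, div_one] at hfinal
  simpa only [hEq] using hfinal
end
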